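/- Let (A, τ) be a noncommutative probability space. There exists a unique family (R⁽ⁿ⁾)_{n≥1}, where each R⁽ⁿ⁾ : Aⁿ → ℂ is an n-multilinear functional, such that for every n ≥ 1 and all a₁, …, a_n ∈ A one has τ(a₁⋯a_n) = Σ_{π ∈ NC(n)} Π_{V ∈ π} R^{(|V|)}(a_{j₁}, …, a_{j_k}), where the product runs over the blocks V = {j₁ < j₂ < … < j_k} of the noncrossing partition π. -/

import Mathlib

open scoped Classical

/-- `π` is a partition of `{1, …, n}` (modelled as `Fin n`): the blocks are nonempty and
every point belongs to exactly one block. -/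
def IsPartition {n : ℕ} (π : Finset (Finset (Fin n))) : Prop :=
  (∀ B ∈ π, B.Nonempty) ∧ ∀ i : Fin n, ∃! B : Finset (Fin n), B ∈ π ∧ i ∈ B

/-- A partition of `{1, …, n}` is noncrossing if there is no quadruple `i < j < k < l`
with `i, k` in one block and `j, l` in a different block. -/
def IsNoncrossing {n : ℕ} (π : Finset (Finset (Fin n))) : Prop :=
  ¬ ∃ i j k l : Fin n, i < j ∧ j < k ∧ k < l ∧
      ∃ B ∈ π, ∃ B' ∈ π, B ≠ B' ∧ i ∈ B ∧ k ∈ B ∧ j ∈ B' ∧ l ∈ B'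

/-- `NC n`: the (finite) set of noncrossing partitions of `{1, …, n}`. -/
noncomputable def NC (n : ℕ) : Finset (Finset (Finset (Fin n))) :=
  Finset.univ.filter fun π => IsPartition π ∧ IsNoncrossing π

/-- The term `Π_{V ∈ π} R^{(|V|)}(a_{j₁}, …, a_{j_k})` associated to a partition `π`,
where each block `V = {j₁ < … < j_k}` is listed in increasing order. -/
noncomputable def cumulantTerm {A : Type*} [Ring A] [Algebra ℂ A]
    (R : ∀ m : ℕ, MultilinearMap ℂ (fun _ : Fin m => A) ℂ)
    {n : ℕ} (π : Finset (Finset (Fin n))) (a : Fin n → A) : ℂ :=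
  ∏ B ∈ π, R B.card fun i => a (B.orderIsoOfFin rfl i).1

/-- The moment–cumulant relation: for every `n ≥ 1` and `a₁, …, a_n ∈ A`,
`τ(a₁ ⋯ a_n) = Σ_{π ∈ NC(n)} Π_{V ∈ π} R^{(|V|)}(a_V)`. -/
def MomentCumulant {A : Type*} [Ring A] [Algebra ℂ A] (τ : A →ₗ[ℂ] ℂ)
    (R : ∀ m : ℕ, MultilinearMap ℂ (fun _ : Fin m => A) ℂ) : Prop :=
  ∀ n : ℕ, 0 < n → ∀ a : Fin n → A,
    τ (List.ofFn a).prod = ∑ π ∈ NC n, cumulantTerm R π a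

/-! ### Auxiliary lemmas -/

lemma isPartition_of_mem_NC {n : ℕ} {π : Finset (Finset (Fin n))} (h : π ∈ NC n) :
    IsPartition π := ((Finset.mem_filter.1 h).2).1

/-- Any block of a partition other than the full partition `{univ}` has fewer than `n`
elements. -/
lemma block_card_lt {n : ℕ} {π : Finset (Finset (Fin n))} (hπ : IsPartition π)
    (hne : π ≠ {(Finset.univ : Finset (Fin n))}) {B : Finset (Fin n)} (hB : B ∈ π) :
    B.card < n := by
  have hle : B.card ≤ n := by simpa using Finset.card_le_univ B
  rcases lt_or_eq_of_le hle with h | h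
  · exact h
  · exfalso
    have hBu : B = Finset.univ := Finset.eq_univ_of_card B (by simpa using h)
    apply hne
    ext B'
    simp only [Finset.mem_singleton]
    constructor
    · intro hB'
      obtain ⟨i, hi⟩ := hπ.1 B' hB'
      obtain ⟨C, _, hu⟩ := hπ.2 i
      have h1 := hu B' ⟨hB', hi⟩
      have h2 := hu Finset.univ ⟨hBu ▸ hB, Finset.mem_univ i⟩
      rw [h1, h2]
    · intro h'; subst h'; exact hBu ▸ hB

/-- For `n ≥ 1` the one-block partition `{univ}` is a noncrossing partition. -/
lemma univ_mem_NC {n : ℕ} (hn : 0 < n) :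
    {(Finset.univ : Finset (Fin n))} ∈ NC n := by
  simp only [NC, Finset.mem_filter, Finset.mem_univ, true_and]
  refine ⟨⟨?_, ?_⟩, ?_⟩
  · intro B hB
    simp only [Finset.mem_singleton] at hB
    subst hB
    exact ⟨⟨0, hn⟩, Finset.mem_univ _⟩
  · intro i
    refine ⟨Finset.univ, ⟨Finset.mem_singleton_self _, Finset.mem_univ i⟩, ?_⟩
    intro B hB
    simpa using hB.1
  · rintro ⟨i, j, k, l, _, _, _, B, hB, B', hB', hne, _⟩
    simp only [Finset.mem_singleton] at hB hB'
    exact hne (hB.trans hB'.symm)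

section Aux

variable {A : Type*} [Ring A] [Algebra ℂ A] {n : ℕ}

omit [Ring A] [Algebra ℂ A] in
lemma update_comp_of_not_mem {B : Finset (Fin n)} {j : Fin n} (hj : j ∉ B)
    (a : Fin n → A) (v : A) :
    (fun i => Function.update a j v (B.orderIsoOfFin rfl i).1) =
      fun i => a (B.orderIsoOfFin rfl i).1 := by
  funext i
  apply Function.update_of_ne
  intro h
  exact hj (h ▸ (B.orderIsoOfFin rfl i).2)

omit [Ring A] [Algebra ℂ A] in
lemma update_comp_of_mem {B : Finset (Fin n)} {j : Fin n} (hj : j ∈ B)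
    (a : Fin n → A) (v : A) :
    (fun i => Function.update a j v (B.orderIsoOfFin rfl i).1) =
      Function.update (fun i => a (B.orderIsoOfFin rfl i).1)
        ((B.orderIsoOfFin rfl).symm ⟨j, hj⟩) v := by
  funext i
  by_cases h : i = (B.orderIsoOfFin rfl).symm ⟨j, hj⟩
  · subst h
    have h2 : (B.orderIsoOfFin rfl ((B.orderIsoOfFin rfl).symm ⟨j, hj⟩)).1 = j := by
      rw [OrderIso.apply_symm_apply]
    rw [h2, Function.update_self, Function.update_self]
  · have h1 : (B.orderIsoOfFin rfl i).1 ≠ j := by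
      intro he
      apply h
      have : B.orderIsoOfFin rfl i = ⟨j, hj⟩ := Subtype.ext he
      rw [← this, OrderIso.symm_apply_apply]
    rw [Function.update_of_ne h1, Function.update_of_ne h]

/-- The product of multilinear functionals along the blocks of a partition, bundled as a
multilinear map in the `n` variables. -/
noncomputable def blockProd (π : Finset (Finset (Fin n))) (hπ : IsPartition π)
    (F : ∀ B : Finset (Fin n), B ∈ π → MultilinearMap ℂ (fun _ : Fin B.card => A) ℂ) :
    MultilinearMap ℂ (fun _ : Fin n => A) ℂ where
  toFun a := ∏ B ∈ π.attach, F B.1 B.2 fun i => a (B.1.orderIsoOfFin rfl i).1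
  map_update_add' := by
    intro dec a j x y
    have hdec : dec = instDecidableEqFin n := Subsingleton.elim _ _
    subst hdec
    obtain ⟨B₀, ⟨hB₀π, hjB₀⟩, huniq⟩ := hπ.2 j
    set b₀ : {B // B ∈ π} := ⟨B₀, hB₀π⟩ with hb₀
    set i₀ := (B₀.orderIsoOfFin rfl).symm ⟨j, hjB₀⟩ with hi₀
    have key : ∀ v : A,
        (∏ B ∈ π.attach, F B.1 B.2 fun i => Function.update a j v (B.1.orderIsoOfFin rfl i).1) =
          F B₀ hB₀π (Function.update (fun i => a (B₀.orderIsoOfFin rfl i).1) i₀ v) *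
            ∏ B ∈ π.attach.erase b₀, F B.1 B.2 fun i => a (B.1.orderIsoOfFin rfl i).1 := by
      intro v
      rw [← Finset.mul_prod_erase _ _ (Finset.mem_attach _ b₀)]
      congr 1
      · rw [update_comp_of_mem hjB₀]
      · apply Finset.prod_congr rfl
        intro B hB
        have hne : B.1 ≠ B₀ := by
          intro h
          exact (Finset.ne_of_mem_erase hB) (Subtype.ext h)
        have hj : j ∉ B.1 := by
          intro hj'
          exact hne (huniq B.1 ⟨B.2, hj'⟩)
        rw [update_comp_of_not_mem hj]
    rw [key, key, key, (F B₀ hB₀π).map_update_add, add_mul]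
  map_update_smul' := by
    intro dec a j c x
    have hdec : dec = instDecidableEqFin n := Subsingleton.elim _ _
    subst hdec
    obtain ⟨B₀, ⟨hB₀π, hjB₀⟩, huniq⟩ := hπ.2 j
    set b₀ : {B // B ∈ π} := ⟨B₀, hB₀π⟩ with hb₀
    set i₀ := (B₀.orderIsoOfFin rfl).symm ⟨j, hjB₀⟩ with hi₀
    have key : ∀ v : A,
        (∏ B ∈ π.attach, F B.1 B.2 fun i => Function.update a j v (B.1.orderIsoOfFin rfl i).1) =
          F B₀ hB₀π (Function.update (fun i => a (B₀.orderIsoOfFin rfl i).1) i₀ v) *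
            ∏ B ∈ π.attach.erase b₀, F B.1 B.2 fun i => a (B.1.orderIsoOfFin rfl i).1 := by
      intro v
      rw [← Finset.mul_prod_erase _ _ (Finset.mem_attach _ b₀)]
      congr 1
      · rw [update_comp_of_mem hjB₀]
      · apply Finset.prod_congr rfl
        intro B hB
        have hne : B.1 ≠ B₀ := by
          intro h
          exact (Finset.ne_of_mem_erase hB) (Subtype.ext h)
        have hj : j ∉ B.1 := by
          intro hj'
          exact hne (huniq B.1 ⟨B.2, hj'⟩)
        rw [update_comp_of_not_mem hj]
    rw [key, key, (F B₀ hB₀π).map_update_smul, smul_eq_mul, smul_eq_mul, mul_assoc]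

@[simp] lemma blockProd_apply (π : Finset (Finset (Fin n))) (hπ : IsPartition π)
    (F : ∀ B : Finset (Fin n), B ∈ π → MultilinearMap ℂ (fun _ : Fin B.card => A) ℂ)
    (a : Fin n → A) :
    blockProd π hπ F a = ∏ B ∈ π.attach, F B.1 B.2 fun i => a (B.1.orderIsoOfFin rfl i).1 := rfl

/-- The free cumulant functionals, defined by Möbius-style recursion: `R⁽ⁿ⁾` is the moment
functional minus the contributions of all noncrossing partitions other than `{univ}`. -/
noncomputable def freeCum (τ : A →ₗ[ℂ] ℂ) : (n : ℕ) → MultilinearMap ℂ (fun _ : Fin n => A) ℂ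
  | n =>
    τ.compMultilinearMap (MultilinearMap.mkPiAlgebraFin ℂ n A) -
      ∑ p ∈ ((NC n).erase {Finset.univ}).attach,
        blockProd p.1 (isPartition_of_mem_NC (Finset.mem_of_mem_erase p.2))
          (fun B hB => freeCum τ B.card)
  termination_by n => n
  decreasing_by
    exact block_card_lt (isPartition_of_mem_NC (Finset.mem_of_mem_erase p.2))
      (Finset.ne_of_mem_erase p.2) hB

lemma freeCum_apply (τ : A →ₗ[ℂ] ℂ) (n : ℕ) (a : Fin n → A) :
    freeCum τ n a = τ (List.ofFn a).prod -
      ∑ π ∈ (NC n).erase {Finset.univ}, cumulantTerm (freeCum τ) π a := by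
  rw [freeCum]
  simp only [MultilinearMap.sub_apply, MultilinearMap.sum_apply,
    LinearMap.compMultilinearMap_apply, MultilinearMap.mkPiAlgebraFin_apply, blockProd_apply]
  congr 1
  rw [← Finset.sum_attach ((NC n).erase {Finset.univ})
    (fun π => cumulantTerm (freeCum τ) π a)]
  apply Finset.sum_congr rfl
  intro p _
  rw [cumulantTerm]
  exact Finset.prod_attach (p : Finset (Finset (Fin n)))
    (fun B => (freeCum τ B.card) fun i => a ((B.orderIsoOfFin rfl i) : Fin n))

lemma apply_cast (F : ∀ m : ℕ, MultilinearMap ℂ (fun _ : Fin m => A) ℂ)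
    {m k : ℕ} (h : m = k) (a : Fin k → A) :
    F m (fun i => a (Fin.cast h i)) = F k a := by
  subst h
  congr

lemma cumulantTerm_univ (F : ∀ m : ℕ, MultilinearMap ℂ (fun _ : Fin m => A) ℂ)
    (a : Fin n → A) :
    cumulantTerm F {(Finset.univ : Finset (Fin n))} a = F n a := by
  rw [cumulantTerm, Finset.prod_singleton]
  have h : (Finset.univ : Finset (Fin n)).card = n := Finset.card_fin n
  have hmono : StrictMono (fun i => Fin.cast h i) := fun i j hij => hij
  have hu := Finset.orderEmbOfFin_unique (s := (Finset.univ : Finset (Fin n))) rfl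
    (f := fun i => Fin.cast h i) (fun x => Finset.mem_univ _) hmono
  have he : (fun i => a ((Finset.univ : Finset (Fin n)).orderIsoOfFin rfl i).1) =
      fun i => a (Fin.cast h i) := by
    funext i
    rw [Finset.coe_orderIsoOfFin_apply, ← hu]
  rw [he, apply_cast]

end Aux

/-- In a noncommutative probability space `(A, τ)` there exists a family of multilinear
functionals `(R⁽ⁿ⁾)` satisfying the moment–cumulant relation over noncrossing partitions,
and the functionals `R⁽ⁿ⁾` for `n ≥ 1` are uniquely determined by this relation. -/
theorem exists_unique_noncrossing_cumulants {A : Type*} [Ring A] [Algebra ℂ A]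
    (τ : A →ₗ[ℂ] ℂ) (hτ1 : τ 1 = 1) :
    ∃ R : ∀ m : ℕ, MultilinearMap ℂ (fun _ : Fin m => A) ℂ,
      MomentCumulant τ R ∧
        ∀ R' : ∀ m : ℕ, MultilinearMap ℂ (fun _ : Fin m => A) ℂ,
          MomentCumulant τ R' → ∀ n : ℕ, 0 < n → R' n = R n := by
  refine ⟨freeCum τ, ?_, ?_⟩
  · intro n hn a
    rw [← Finset.add_sum_erase _ _ (univ_mem_NC hn), cumulantTerm_univ, freeCum_apply]
    ring
  · intro R' hR' n
    induction n using Nat.strong_induction_on with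
    | _ n IH =>
      intro hn
      ext a
      have h1 := hR' n hn a
      rw [← Finset.add_sum_erase _ _ (univ_mem_NC hn), cumulantTerm_univ] at h1
      have h4 : ∑ π ∈ (NC n).erase {Finset.univ}, cumulantTerm R' π a
          = ∑ π ∈ (NC n).erase {Finset.univ}, cumulantTerm (freeCum τ) π a := by
        apply Finset.sum_congr rfl
        intro π hπ
        rw [cumulantTerm, cumulantTerm]
        apply Finset.prod_congr rfl
        intro B hB
        have hmem := Finset.mem_of_mem_erase hπ
        have hlt := block_card_lt (isPartition_of_mem_NC hmem)
          (Finset.ne_of_mem_erase hπ) hB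
        have hpos : 0 < B.card :=
          Finset.card_pos.2 ((isPartition_of_mem_NC hmem).1 B hB)
        rw [IH B.card hlt hpos]
      rw [h4] at h1
      rw [freeCum_apply]
      linear_combination -h1
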